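/- arXiv:2006.02857 — 3 statements merged into one kernel-verified Lean document; each statement's English description precedes it below -/
import Mathlib

section
/- Let r_d > 0, u, σ, α, β, A₁, T be reals, γ > 0, θ > 0, λ ∈ ℝ, σ_f² + σ_Q² > 0. Let h : ℝ × ℝ → ℝ admit a partial derivative h_t in the first variable and first and second partial derivatives h_m, h_{mm} in the second variable, and suppose that for all (t,m) ∈ [0,T] × ℝ: h_t(t,m) − uθe^{r_d(T−t)} + (1/2)θ²σ²e^{2r_d(T−t)} − (A₁ + m)²/(2(σ_f² + σ_Q²)) + αm·h_m(t,m) + (1/2)β²(h_m(t,m)² + h_{mm}(t,m)) = 0, and h(T,m) = 0. Define V(t,x,m) = λ − (γ/θ)·exp{−θ x e^{r_d(T−t)} + h(t,m)}. Then V(T,x,m) = λ − (γ/θ)e^{−θx} for all x, m, and for every (t,x,m) ∈ [0,T] × ℝ × ℝ: (i) the supremum over π ∈ ℝ of [π(A₁ + m) + x r_d + u]·V_x(t,x,m) + (1/2)[σ² + π²(σ_f² + σ_Q²)]·V_{xx}(t,x,m) is attained at π*(t,m) = ((A₁ + m)/(θ(σ_f² + σ_Q²)))·e^{−r_d(T−t)};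 and (ii) V_t(t,x,m) + [π*(A₁ + m) + x r_d + u]·V_x + (1/2)[σ² + (π*)²(σ_f² + σ_Q²)]·V_{xx} + αm·V_m(t,x,m) + (1/2)β²·V_{mm}(t,x,m) = 0. -/
lemma aux_sup (S E W γ θ A c e d p : ℝ) (hS : 0 < S) (hE : 0 < E) (hW : 0 < W)
    (hγ : 0 < γ) (hθ : 0 < θ) :
    (p * A + c + e) * (γ * E * W) + 1 / 2 * (d + p ^ 2 * S) * -(γ * θ * E ^ 2 * W)
      ≤ (A / (θ * S) * E⁻¹ * A + c + e) * (γ * E * W)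
        + 1 / 2 * (d + (A / (θ * S) * E⁻¹) ^ 2 * S) * -(γ * θ * E ^ 2 * W) := by
  rw [← sub_nonneg]
  have hkey : (A / (θ * S) * E⁻¹ * A + c + e) * (γ * E * W)
        + 1 / 2 * (d + (A / (θ * S) * E⁻¹) ^ 2 * S) * -(γ * θ * E ^ 2 * W)
      - ((p * A + c + e) * (γ * E * W) + 1 / 2 * (d + p ^ 2 * S) * -(γ * θ * E ^ 2 * W))
      = γ * θ * E ^ 2 * W * S / 2 * (A / (θ * S) * E⁻¹ - p) ^ 2 := by
    field_simp
    ring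
  rw [hkey]
  positivity



/-- Analytic core of Theorem 3.3: if `h(t,m)` solves the reduced HJB PDE on
`[0,T] × ℝ` with `h(T,·) = 0`, then the candidate value function
`V(t,x,m) = λ − (γ/θ)exp{−θxe^{r_d(T−t)} + h(t,m)}` satisfies the terminal
condition `V(T,x,m) = λ − (γ/θ)e^{−θx}`, the supremum in the HJB equation is
attained at `π*(t,m) = ((A₁+m)/(θ(σ_f²+σ_Q²)))e^{−r_d(T−t)}`, and `V` solves the
HJB equation with `π = π*`. -/
theorem stmt9 (r_d u σ α β A₁ T γ θ lam σ_f σ_Q : ℝ)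
    (hr : r_d > 0) (hγ : γ > 0) (hθ : θ > 0) (hσ : σ_f ^ 2 + σ_Q ^ 2 > 0)
    (h ht hm hmm : ℝ → ℝ → ℝ)
    (hht : ∀ t m : ℝ, HasDerivAt (fun s => h s m) (ht t m) t)
    (hhm : ∀ t m : ℝ, HasDerivAt (fun n => h t n) (hm t m) m)
    (hhmm : ∀ t m : ℝ, HasDerivAt (fun n => hm t n) (hmm t m) m)
    (hpde : ∀ t ∈ Set.Icc (0 : ℝ) T, ∀ m : ℝ,
      ht t m - u * θ * Real.exp (r_d * (T - t))
        + (1 / 2) * θ ^ 2 * σ ^ 2 * Real.exp (2 * r_d * (T - t))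
        - (A₁ + m) ^ 2 / (2 * (σ_f ^ 2 + σ_Q ^ 2))
        + α * m * hm t m
        + (1 / 2) * β ^ 2 * ((hm t m) ^ 2 + hmm t m) = 0)
    (hterm : ∀ m : ℝ, h T m = 0) :
    let V : ℝ → ℝ → ℝ → ℝ := fun t x m =>
      lam - (γ / θ) * Real.exp (-(θ * x * Real.exp (r_d * (T - t))) + h t m)
    let pstar : ℝ → ℝ → ℝ := fun t m =>
      (A₁ + m) / (θ * (σ_f ^ 2 + σ_Q ^ 2)) * Real.exp (-(r_d * (T - t)))
    (∀ x m : ℝ, V T x m = lam - (γ / θ) * Real.exp (-(θ * x))) ∧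
    (∀ t ∈ Set.Icc (0 : ℝ) T, ∀ x m : ℝ,
      (∀ pp : ℝ,
        (pp * (A₁ + m) + x * r_d + u) * deriv (fun x' => V t x' m) x
          + (1 / 2) * (σ ^ 2 + pp ^ 2 * (σ_f ^ 2 + σ_Q ^ 2))
            * deriv (deriv (fun x' => V t x' m)) x
        ≤ (pstar t m * (A₁ + m) + x * r_d + u) * deriv (fun x' => V t x' m) x
          + (1 / 2) * (σ ^ 2 + (pstar t m) ^ 2 * (σ_f ^ 2 + σ_Q ^ 2))
            * deriv (deriv (fun x' => V t x' m)) x) ∧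
      deriv (fun s => V s x m) t
        + (pstar t m * (A₁ + m) + x * r_d + u) * deriv (fun x' => V t x' m) x
        + (1 / 2) * (σ ^ 2 + (pstar t m) ^ 2 * (σ_f ^ 2 + σ_Q ^ 2))
          * deriv (deriv (fun x' => V t x' m)) x
        + α * m * deriv (fun n => V t x n) m
        + (1 / 2) * β ^ 2 * deriv (deriv (fun n => V t x n)) m = 0) := by
  intro V pstar
  have hθne : θ ≠ 0 := ne_of_gt hθ
  have hSne : σ_f ^ 2 + σ_Q ^ 2 ≠ 0 := ne_of_gt hσ
  have hV : ∀ t x m : ℝ, V t x m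
      = lam - γ / θ * Real.exp (-(θ * x * Real.exp (r_d * (T - t))) + h t m) :=
    fun _ _ _ => rfl
  have hp : ∀ t m : ℝ, pstar t m
      = (A₁ + m) / (θ * (σ_f ^ 2 + σ_Q ^ 2)) * Real.exp (-(r_d * (T - t))) :=
    fun _ _ => rfl
  refine ⟨?_, ?_⟩
  · intro x m
    simp only [hV]
    simp [hterm m]
  · intro t htmem x m
    simp only [hV, hp, Real.exp_neg]
    set E := Real.exp (r_d * (T - t)) with hEdef
    have hEpos : 0 < E := Real.exp_pos _
    have hEne : E ≠ 0 := ne_of_gt hEpos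
    set W := Real.exp (-(θ * x * E) + h t m) with hWdef
    have hWpos : 0 < W := Real.exp_pos _
    have hVx : ∀ y : ℝ, HasDerivAt (fun x' => lam - γ / θ * Real.exp (-(θ * x' * E) + h t m))
        (γ * E * Real.exp (-(θ * y * E) + h t m)) y := by
      intro y
      have h1 : HasDerivAt (fun x' : ℝ => -(θ * x' * E) + h t m) (-(θ * E)) y := by
        have := (((hasDerivAt_id y).const_mul θ).mul_const E).neg.add_const (h t m)
        refine this.congr_deriv ?_
        ring
      have h2 := (h1.exp.const_mul (γ / θ)).const_sub lam
      refine h2.congr_deriv ?_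
      field_simp
    have d1 : deriv (fun x' => lam - γ / θ * Real.exp (-(θ * x' * E) + h t m))
        = fun y => γ * E * Real.exp (-(θ * y * E) + h t m) :=
      funext fun y => (hVx y).deriv
    have d1x : deriv (fun x' => lam - γ / θ * Real.exp (-(θ * x' * E) + h t m)) x
        = γ * E * W := by rw [d1]
    have hVxx : HasDerivAt (fun y : ℝ => γ * E * Real.exp (-(θ * y * E) + h t m))
        (-(γ * θ * E ^ 2 * W)) x := by
      have h1 : HasDerivAt (fun x' : ℝ => -(θ * x' * E) + h t m) (-(θ * E)) x := by
        have := (((hasDerivAt_id x).const_mul θ).mul_const E).neg.add_const (h t m)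
        refine this.congr_deriv ?_
        ring
      have h2 := h1.exp.const_mul (γ * E)
      refine h2.congr_deriv ?_
      rw [hWdef]; ring
    have d2 : deriv (deriv (fun x' => lam - γ / θ * Real.exp (-(θ * x' * E) + h t m))) x
        = -(γ * θ * E ^ 2 * W) := by
      rw [d1]; exact hVxx.deriv
    have hVm : ∀ n : ℝ, HasDerivAt (fun n' => lam - γ / θ * Real.exp (-(θ * x * E) + h t n'))
        (-(γ / θ * (Real.exp (-(θ * x * E) + h t n) * hm t n))) n := by
      intro n
      have h1 : HasDerivAt (fun n' : ℝ => -(θ * x * E) + h t n') (hm t n) n :=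
        (hhm t n).const_add _
      have h2 := (h1.exp.const_mul (γ / θ)).const_sub lam
      convert h2 using 1
    have dm : deriv (fun n => lam - γ / θ * Real.exp (-(θ * x * E) + h t n))
        = fun n => -(γ / θ * (Real.exp (-(θ * x * E) + h t n) * hm t n)) :=
      funext fun n => (hVm n).deriv
    have dm1 : deriv (fun n => lam - γ / θ * Real.exp (-(θ * x * E) + h t n)) m
        = -(γ / θ * (W * hm t m)) := by rw [dm]
    have hVmm : HasDerivAt (fun n : ℝ => -(γ / θ * (Real.exp (-(θ * x * E) + h t n) * hm t n)))
        (-(γ / θ * (W * ((hm t m) ^ 2 + hmm t m)))) m := by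
      have h1 : HasDerivAt (fun n' : ℝ => -(θ * x * E) + h t n') (hm t m) m :=
        (hhm t m).const_add _
      have h2 := ((h1.exp.mul (hhmm t m)).const_mul (γ / θ)).neg
      refine h2.congr_deriv ?_
      rw [hWdef]; ring
    have dmm : deriv (deriv (fun n => lam - γ / θ * Real.exp (-(θ * x * E) + h t n))) m
        = -(γ / θ * (W * ((hm t m) ^ 2 + hmm t m))) := by
      rw [dm]; exact hVmm.deriv
    have hVt : HasDerivAt
        (fun s => lam - γ / θ * Real.exp (-(θ * x * Real.exp (r_d * (T - s))) + h s m))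
        (-(γ / θ * (W * (θ * x * r_d * E + ht t m)))) t := by
      have h1 : HasDerivAt (fun s : ℝ => r_d * (T - s)) (-r_d) t := by
        have := ((hasDerivAt_id t).const_sub T).const_mul r_d
        refine this.congr_deriv ?_
        ring
      have h2 : HasDerivAt (fun s : ℝ => -(θ * x * Real.exp (r_d * (T - s))) + h s m)
          (θ * x * r_d * E + ht t m) t := by
        have h3 := ((h1.exp.const_mul (θ * x)).neg).add (hht t m)
        refine h3.congr_deriv ?_
        rw [hEdef]; ring
      have h4 := (h2.exp.const_mul (γ / θ)).const_sub lam
      convert h4 using 1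
    have dt1 : deriv
        (fun s => lam - γ / θ * Real.exp (-(θ * x * Real.exp (r_d * (T - s))) + h s m)) t
        = -(γ / θ * (W * (θ * x * r_d * E + ht t m))) := hVt.deriv
    have key := hpde t htmem m
    have hexp2 : Real.exp (2 * r_d * (T - t)) = E ^ 2 := by
      have h0 : (2 : ℝ) * r_d * (T - t) = r_d * (T - t) + r_d * (T - t) := by ring
      rw [h0, Real.exp_add, hEdef]
      ring
    rw [hexp2, ← hEdef] at key
    constructor
    · intro pp
      rw [d1x, d2]
      exact aux_sup (σ_f ^ 2 + σ_Q ^ 2) E W γ θ (A₁ + m) (x * r_d) u (σ ^ 2) pp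
        hσ hEpos hWpos hγ hθ
    · rw [dt1, d1x, d2, dm1, dmm]
      have hht' : ht t m = u * θ * E - 1 / 2 * θ ^ 2 * σ ^ 2 * E ^ 2
          + (A₁ + m) ^ 2 / (2 * (σ_f ^ 2 + σ_Q ^ 2)) - α * m * hm t m
          - 1 / 2 * β ^ 2 * ((hm t m) ^ 2 + hmm t m) := by linarith
      rw [hht']
      field_simp
      ring
end

section
/- Let r_d > 0, u, σ, A₁, T be reals, γ > 0, θ > 0, λ ∈ ℝ, σ_f² + σ_Q² > 0. Define f : ℝ → ℝ by f(s) = (θu/r_d)(1 − e^{r_d s}) − (θ²σ²/(4r_d))(1 − e^{2r_d s}) − (A₁²/(2(σ_f² + σ_Q²)))·s, and V(t,x) = λ − (γ/θ)·exp{−θ x e^{r_d(T−t)} + f(T−t)}. Then V(T,x) = λ − (γ/θ)e^{−θx} for all x, and for every (t,x) ∈ [0,T] × ℝ: (i) the supremum over π ∈ ℝ of [πA₁ + x r_d + u]·V_x(t,x) + (1/2)[σ² + π²(σ_f² + σ_Q²)]·V_{xx}(t,x) is attained at π*(t) = (A₁/(θ(σ_f² + σ_Q²)))·e^{−r_d(T−t)};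 and (ii) V_t(t,x) + [π*(t)A₁ + x r_d + u]·V_x(t,x) + (1/2)[σ² + π*(t)²(σ_f² + σ_Q²)]·V_{xx}(t,x) = 0. -/
/-- Analytic content of Corollary 3.1 (exchange rate a geometric Brownian motion):
the candidate value function `V(t,x) = λ − (γ/θ)exp{−θxe^{r_d(T−t)} + f(T−t)}` with
`f(s) = (θu/r_d)(1−e^{r_d s}) − (θ²σ²/(4r_d))(1−e^{2r_d s}) − (A₁²/(2(σ_f²+σ_Q²)))s`
satisfies the terminal condition, the supremum in the HJB equation is attained at
`π*(t) = (A₁/(θ(σ_f²+σ_Q²)))e^{−r_d(T−t)}`, and `V` solves the HJB equation. -/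
theorem stmt10 (r_d u σ A₁ T γ θ lam σ_f σ_Q : ℝ)
    (hr : r_d > 0) (hγ : γ > 0) (hθ : θ > 0) (hσ : σ_f ^ 2 + σ_Q ^ 2 > 0) :
    let f : ℝ → ℝ := fun s =>
      (θ * u / r_d) * (1 - Real.exp (r_d * s))
        - (θ ^ 2 * σ ^ 2 / (4 * r_d)) * (1 - Real.exp (2 * r_d * s))
        - (A₁ ^ 2 / (2 * (σ_f ^ 2 + σ_Q ^ 2))) * s
    let V : ℝ → ℝ → ℝ := fun t x =>
      lam - (γ / θ) * Real.exp (-(θ * x * Real.exp (r_d * (T - t))) + f (T - t))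
    let pstar : ℝ → ℝ := fun t =>
      A₁ / (θ * (σ_f ^ 2 + σ_Q ^ 2)) * Real.exp (-(r_d * (T - t)))
    (∀ x : ℝ, V T x = lam - (γ / θ) * Real.exp (-(θ * x))) ∧
    (∀ t ∈ Set.Icc (0 : ℝ) T, ∀ x : ℝ,
      (∀ pp : ℝ,
        (pp * A₁ + x * r_d + u) * deriv (fun x' => V t x') x
          + (1 / 2) * (σ ^ 2 + pp ^ 2 * (σ_f ^ 2 + σ_Q ^ 2))
            * deriv (deriv (fun x' => V t x')) x
        ≤ (pstar t * A₁ + x * r_d + u) * deriv (fun x' => V t x') x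
          + (1 / 2) * (σ ^ 2 + (pstar t) ^ 2 * (σ_f ^ 2 + σ_Q ^ 2))
            * deriv (deriv (fun x' => V t x')) x) ∧
      deriv (fun s => V s x) t
        + (pstar t * A₁ + x * r_d + u) * deriv (fun x' => V t x') x
        + (1 / 2) * (σ ^ 2 + (pstar t) ^ 2 * (σ_f ^ 2 + σ_Q ^ 2))
          * deriv (deriv (fun x' => V t x')) x = 0) := by
  intro f V pstar
  have hθ' : θ ≠ 0 := ne_of_gt hθ
  have hr' : r_d ≠ 0 := ne_of_gt hr
  have hS' : σ_f ^ 2 + σ_Q ^ 2 ≠ 0 := ne_of_gt hσ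
  constructor
  · intro x
    simp only [V, f, sub_self, mul_zero, Real.exp_zero, mul_one, sub_zero]
    norm_num
  · intro t ht x
    -- abbreviations
    have hE2eq : Real.exp (2 * r_d * (T - t)) = Real.exp (r_d * (T - t)) ^ 2 := by
      rw [sq, ← Real.exp_add]; congr 1; ring
    have hEB : Real.exp (r_d * (T - t)) * Real.exp (-(r_d * (T - t))) = 1 := by
      rw [← Real.exp_add]; simp
    have hkey : A₁ = θ * (σ_f ^ 2 + σ_Q ^ 2) * (Real.exp (r_d * (T - t)) * pstar t) := by
      simp only [pstar]
      have : θ * (σ_f ^ 2 + σ_Q ^ 2) *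
          (Real.exp (r_d * (T - t)) *
            (A₁ / (θ * (σ_f ^ 2 + σ_Q ^ 2)) * Real.exp (-(r_d * (T - t)))))
          = A₁ * (Real.exp (r_d * (T - t)) * Real.exp (-(r_d * (T - t)))) := by
        field_simp
      rw [this, hEB, mul_one]
    -- first x-derivative as a function
    have hDx : deriv (fun x' => V t x')
        = fun y => γ * Real.exp (r_d * (T - t))
            * Real.exp (-(θ * y * Real.exp (r_d * (T - t))) + f (T - t)) := by
      funext y
      have h : HasDerivAt (fun x' => V t x')
          (γ * Real.exp (r_d * (T - t))
            * Real.exp (-(θ * y * Real.exp (r_d * (T - t))) + f (T - t))) y := by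
        have h2 := ((((hasDerivAt_id y).const_mul θ).mul_const
            (Real.exp (r_d * (T - t)))).neg.add_const (f (T - t))).exp
        have h3 := (h2.const_mul (γ / θ)).const_sub lam
        refine h3.congr_deriv ?_
        simp only [Pi.neg_apply, id]
        field_simp
      exact h.deriv
    have hDxx : deriv (deriv (fun x' => V t x')) x
        = -(θ * γ * Real.exp (r_d * (T - t)) ^ 2
            * Real.exp (-(θ * x * Real.exp (r_d * (T - t))) + f (T - t))) := by
      rw [hDx]
      have h2 := ((((hasDerivAt_id x).const_mul θ).mul_const
          (Real.exp (r_d * (T - t)))).neg.add_const (f (T - t))).exp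
      have h3 : HasDerivAt (fun y => γ * Real.exp (r_d * (T - t))
            * Real.exp (-(θ * y * Real.exp (r_d * (T - t))) + f (T - t)))
          (γ * Real.exp (r_d * (T - t))
            * (Real.exp (-(θ * x * Real.exp (r_d * (T - t))) + f (T - t))
              * -(θ * 1 * Real.exp (r_d * (T - t))))) x :=
        h2.const_mul (γ * Real.exp (r_d * (T - t)))
      rw [h3.deriv]
      ring
    have hDxval : deriv (fun x' => V t x') x
        = γ * Real.exp (r_d * (T - t))
            * Real.exp (-(θ * x * Real.exp (r_d * (T - t))) + f (T - t)) := by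
      rw [hDx]
    -- time derivative
    have hVt : HasDerivAt (fun s => V s x)
        (-(γ / θ) * Real.exp (-(θ * x * Real.exp (r_d * (T - t))) + f (T - t))
          * (θ * x * r_d * Real.exp (r_d * (T - t))
            + θ * u * Real.exp (r_d * (T - t))
            - θ ^ 2 * σ ^ 2 / 2 * Real.exp (2 * r_d * (T - t))
            + A₁ ^ 2 / (2 * (σ_f ^ 2 + σ_Q ^ 2)))) t := by
      have h0 : HasDerivAt (fun s : ℝ => T - s) (-1) t := (hasDerivAt_id t).const_sub T
      have hE1 := (h0.const_mul r_d).exp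
      have hE2 := (h0.const_mul (2 * r_d)).exp
      have hterm1 := (hE1.const_mul (θ * x)).neg
      have hf1 := (hE1.const_sub 1).const_mul (θ * u / r_d)
      have hf2 := (hE2.const_sub 1).const_mul (θ ^ 2 * σ ^ 2 / (4 * r_d))
      have hf3 := h0.const_mul (A₁ ^ 2 / (2 * (σ_f ^ 2 + σ_Q ^ 2)))
      have hG := hterm1.add ((hf1.sub hf2).sub hf3)
      have hV0 := (hG.exp.const_mul (γ / θ)).const_sub lam
      refine hV0.congr_deriv ?_
      simp only [Pi.add_apply, Pi.sub_apply, Pi.neg_apply]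
      simp only [f]
      field_simp
      ring
    rw [hDxval, hDxx, hVt.deriv, hkey, hE2eq]
    set E := Real.exp (r_d * (T - t)) with hE
    set G := Real.exp (-(θ * x * E) + f (T - t)) with hG
    set S := σ_f ^ 2 + σ_Q ^ 2 with hS
    set P := pstar t with hP
    have hGpos : 0 < G := Real.exp_pos _
    have hEpos : 0 < E := Real.exp_pos _
    clear_value E G S P
    constructor
    · intro pp
      have key : ((θ * S * (E * P)) * P + x * r_d + u) * (γ * E * G)
            + (1 / 2) * (σ ^ 2 + P ^ 2 * S) * -(θ * γ * E ^ 2 * G)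
          - (((pp * (θ * S * (E * P)) + x * r_d + u) * (γ * E * G))
            + (1 / 2) * (σ ^ 2 + pp ^ 2 * S) * -(θ * γ * E ^ 2 * G))
          = (1 / 2) * θ * γ * E ^ 2 * G * S * (pp - P) ^ 2 := by ring
      have hpos : 0 ≤ (1 / 2) * θ * γ * E ^ 2 * G * S * (pp - P) ^ 2 := by positivity
      -- goal should be exactly the inequality between these two expressions
      nlinarith [key, hpos]
    · field_simp
      ring
end

section
/- Let r_d > 0, u, σ, u_d, T be reals, σ_d > 0, γ > 0, θ > 0, λ ∈ ℝ. Define g : ℝ → ℝ by g(s) = (θu/r_d)(1 − e^{r_d s}) − (θ²σ²/(4r_d))(1 − e^{2r_d s}) − ((u_d − r_d)²/(2σ_d²))·s, and V(t,x) = λ − (γ/θ)·exp{−θ x e^{r_d(T−t)} + g(T−t)}. Then V(T,x) = λ − (γ/θ)e^{−θx} for all x, and for every (t,x) ∈ [0,T] × ℝ: (i) the supremum over π ∈ ℝ of [π(u_d − r_d) + x r_d + u]·V_x(t,x) + (1/2)[σ² + π²σ_d²]·V_{xx}(t,x) is attained at π*(t) = ((u_d − r_d)/(θσ_d²))·e^{−r_d(T−t)};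 and (ii) V_t(t,x) + [π*(t)(u_d − r_d) + x r_d + u]·V_x(t,x) + (1/2)[σ² + π*(t)²σ_d²]·V_{xx}(t,x) = 0. -/
private lemma L1 (a b d c C x : ℝ) :
    HasDerivAt (fun x' : ℝ => c - C * Real.exp (-(a * x' * b) + d))
      (C * (a * b) * Real.exp (-(a * x * b) + d)) x := by
  have h0 : HasDerivAt (fun x' : ℝ => -(a * x' * b) + d) (-(a * b)) x := by
    have h := (((hasDerivAt_id x).const_mul (a * b)).neg.add_const d)
    have he : (fun x' : ℝ => -(a * x' * b) + d) = fun x' => -((a * b) * x') + d := by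
      funext x'; ring
    rw [he]; simpa using h
  have h1 := (h0.exp.const_mul C).const_sub c
  exact h1.congr_deriv (by ring)

private lemma L2 (a b d K x : ℝ) :
    HasDerivAt (fun x' : ℝ => K * Real.exp (-(a * x' * b) + d))
      (-(K * (a * b)) * Real.exp (-(a * x * b) + d)) x := by
  have h0 : HasDerivAt (fun x' : ℝ => -(a * x' * b) + d) (-(a * b)) x := by
    have h := (((hasDerivAt_id x).const_mul (a * b)).neg.add_const d)
    have he : (fun x' : ℝ => -(a * x' * b) + d) = fun x' => -((a * b) * x') + d := by
      funext x'; ring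
    rw [he]; simpa using h
  have h1 := h0.exp.const_mul K
  exact h1.congr_deriv (by ring)

private lemma Lt (r_d u σ u_d σ_d θ lam γ T x t : ℝ) (hr : r_d ≠ 0) :
    HasDerivAt (fun s : ℝ => lam - γ / θ * Real.exp (-(θ * x * Real.exp (r_d * (T - s))) +
      ((θ * u / r_d) * (1 - Real.exp (r_d * (T - s)))
        - (θ ^ 2 * σ ^ 2 / (4 * r_d)) * (1 - Real.exp (2 * r_d * (T - s)))
        - ((u_d - r_d) ^ 2 / (2 * σ_d ^ 2)) * (T - s))))
      (-(γ / θ * (Real.exp (-(θ * x * Real.exp (r_d * (T - t))) +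
        ((θ * u / r_d) * (1 - Real.exp (r_d * (T - t)))
          - (θ ^ 2 * σ ^ 2 / (4 * r_d)) * (1 - Real.exp (2 * r_d * (T - t)))
          - ((u_d - r_d) ^ 2 / (2 * σ_d ^ 2)) * (T - t)))
        * (θ * x * r_d * Real.exp (r_d * (T - t)) + θ * u * Real.exp (r_d * (T - t))
           - θ ^ 2 * σ ^ 2 / 2 * Real.exp (2 * r_d * (T - t))
           + (u_d - r_d) ^ 2 / (2 * σ_d ^ 2))))) t := by
  have hlin : HasDerivAt (fun s : ℝ => T - s) (-1) t := by
    simpa using (hasDerivAt_id t).const_sub T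
  have he1 := (hlin.const_mul r_d).exp
  have he2 := (hlin.const_mul (2 * r_d)).exp
  have hF := ((he1.const_mul (θ * x)).neg).add
    ((((he1.const_sub 1).const_mul (θ * u / r_d)).sub
      ((he2.const_sub 1).const_mul (θ ^ 2 * σ ^ 2 / (4 * r_d)))).sub
      (hlin.const_mul ((u_d - r_d) ^ 2 / (2 * σ_d ^ 2))))
  have hV := (hF.exp.const_mul (γ / θ)).const_sub lam
  refine hV.congr_deriv ?_
  simp only [Pi.add_apply, Pi.sub_apply, Pi.neg_apply]
  field_simp
  ring

private lemma hjb_ineq {θ σd E K γθ P pp xr uu σ : ℝ}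
    (hK : 0 < K) (hE : 0 < E) (hγθ : 0 < γθ) (hθ : 0 < θ) (hσd : 0 < σd) :
    (pp * (P * (θ * σd ^ 2) * E) + xr + uu) * (γθ * (θ * E) * K)
      + 1 / 2 * (σ ^ 2 + pp ^ 2 * σd ^ 2) * (-(γθ * (θ * E) * (θ * E)) * K)
    ≤ (P * (P * (θ * σd ^ 2) * E) + xr + uu) * (γθ * (θ * E) * K)
      + 1 / 2 * (σ ^ 2 + P ^ 2 * σd ^ 2) * (-(γθ * (θ * E) * (θ * E)) * K) := by
  have h : (P * (P * (θ * σd ^ 2) * E) + xr + uu) * (γθ * (θ * E) * K)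
      + 1 / 2 * (σ ^ 2 + P ^ 2 * σd ^ 2) * (-(γθ * (θ * E) * (θ * E)) * K)
      - ((pp * (P * (θ * σd ^ 2) * E) + xr + uu) * (γθ * (θ * E) * K)
        + 1 / 2 * (σ ^ 2 + pp ^ 2 * σd ^ 2) * (-(γθ * (θ * E) * (θ * E)) * K))
      = 1 / 2 * γθ * θ ^ 2 * σd ^ 2 * E ^ 2 * K * (P - pp) ^ 2 := by ring
  have hpos : 0 ≤ 1 / 2 * γθ * θ ^ 2 * σd ^ 2 * E ^ 2 * K * (P - pp) ^ 2 := by positivity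
  linarith

/-- Analytic content of Corollary 3.2 (domestic market only): the candidate value
function `V(t,x) = λ − (γ/θ)exp{−θxe^{r_d(T−t)} + g(T−t)}` with
`g(s) = (θu/r_d)(1−e^{r_d s}) − (θ²σ²/(4r_d))(1−e^{2r_d s}) − ((u_d−r_d)²/(2σ_d²))s`
satisfies the terminal condition, the supremum in the HJB equation is attained at
`π*(t) = ((u_d−r_d)/(θσ_d²))e^{−r_d(T−t)}`, and `V` solves the HJB equation. -/
theorem stmt11 (r_d u σ u_d T σ_d γ θ lam : ℝ)
    (hr : r_d > 0) (hσd : σ_d > 0) (hγ : γ > 0) (hθ : θ > 0) :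
    let g : ℝ → ℝ := fun s =>
      (θ * u / r_d) * (1 - Real.exp (r_d * s))
        - (θ ^ 2 * σ ^ 2 / (4 * r_d)) * (1 - Real.exp (2 * r_d * s))
        - ((u_d - r_d) ^ 2 / (2 * σ_d ^ 2)) * s
    let V : ℝ → ℝ → ℝ := fun t x =>
      lam - (γ / θ) * Real.exp (-(θ * x * Real.exp (r_d * (T - t))) + g (T - t))
    let pstar : ℝ → ℝ := fun t =>
      (u_d - r_d) / (θ * σ_d ^ 2) * Real.exp (-(r_d * (T - t)))
    (∀ x : ℝ, V T x = lam - (γ / θ) * Real.exp (-(θ * x))) ∧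
    (∀ t ∈ Set.Icc (0 : ℝ) T, ∀ x : ℝ,
      (∀ pp : ℝ,
        (pp * (u_d - r_d) + x * r_d + u) * deriv (fun x' => V t x') x
          + (1 / 2) * (σ ^ 2 + pp ^ 2 * σ_d ^ 2)
            * deriv (deriv (fun x' => V t x')) x
        ≤ (pstar t * (u_d - r_d) + x * r_d + u) * deriv (fun x' => V t x') x
          + (1 / 2) * (σ ^ 2 + (pstar t) ^ 2 * σ_d ^ 2)
            * deriv (deriv (fun x' => V t x')) x) ∧
      deriv (fun s => V s x) t
        + (pstar t * (u_d - r_d) + x * r_d + u) * deriv (fun x' => V t x') x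
        + (1 / 2) * (σ ^ 2 + (pstar t) ^ 2 * σ_d ^ 2)
          * deriv (deriv (fun x' => V t x')) x = 0) := by
  intro g V pstar
  have hθ' : θ ≠ 0 := ne_of_gt hθ
  have hσd' : σ_d ≠ 0 := ne_of_gt hσd
  have hr' : r_d ≠ 0 := ne_of_gt hr
  refine ⟨?_, ?_⟩
  · intro x
    simp only [V, g, sub_self, mul_zero, mul_one, Real.exp_zero, sub_zero, add_zero, zero_mul]
  · intro t ht x
    have hD1 : ∀ y : ℝ, deriv (fun x' => V t x') y
        = γ / θ * (θ * Real.exp (r_d * (T - t))) *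
          Real.exp (-(θ * y * Real.exp (r_d * (T - t))) +
            ((θ * u / r_d) * (1 - Real.exp (r_d * (T - t)))
              - (θ ^ 2 * σ ^ 2 / (4 * r_d)) * (1 - Real.exp (2 * r_d * (T - t)))
              - ((u_d - r_d) ^ 2 / (2 * σ_d ^ 2)) * (T - t))) := by
      intro y
      simp only [V, g]
      exact (L1 θ (Real.exp (r_d * (T - t))) _ lam (γ / θ) y).deriv
    have hder : deriv (fun x' => V t x')
        = fun y => γ / θ * (θ * Real.exp (r_d * (T - t))) *
          Real.exp (-(θ * y * Real.exp (r_d * (T - t))) +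
            ((θ * u / r_d) * (1 - Real.exp (r_d * (T - t)))
              - (θ ^ 2 * σ ^ 2 / (4 * r_d)) * (1 - Real.exp (2 * r_d * (T - t)))
              - ((u_d - r_d) ^ 2 / (2 * σ_d ^ 2)) * (T - t))) := funext hD1
    have hD2 : deriv (deriv (fun x' => V t x')) x
        = -(γ / θ * (θ * Real.exp (r_d * (T - t))) * (θ * Real.exp (r_d * (T - t)))) *
          Real.exp (-(θ * x * Real.exp (r_d * (T - t))) +
            ((θ * u / r_d) * (1 - Real.exp (r_d * (T - t)))
              - (θ ^ 2 * σ ^ 2 / (4 * r_d)) * (1 - Real.exp (2 * r_d * (T - t)))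
              - ((u_d - r_d) ^ 2 / (2 * σ_d ^ 2)) * (T - t))) := by
      rw [hder]
      exact (L2 θ (Real.exp (r_d * (T - t))) _
        (γ / θ * (θ * Real.exp (r_d * (T - t)))) x).deriv
    have hDt : deriv (fun s => V s x) t
        = -(γ / θ * (Real.exp (-(θ * x * Real.exp (r_d * (T - t))) +
            ((θ * u / r_d) * (1 - Real.exp (r_d * (T - t)))
              - (θ ^ 2 * σ ^ 2 / (4 * r_d)) * (1 - Real.exp (2 * r_d * (T - t)))
              - ((u_d - r_d) ^ 2 / (2 * σ_d ^ 2)) * (T - t)))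
            * (θ * x * r_d * Real.exp (r_d * (T - t)) + θ * u * Real.exp (r_d * (T - t))
               - θ ^ 2 * σ ^ 2 / 2 * Real.exp (2 * r_d * (T - t))
               + (u_d - r_d) ^ 2 / (2 * σ_d ^ 2)))) := by
      simp only [V, g]
      exact (Lt r_d u σ u_d σ_d θ lam γ T x t hr').deriv
    have hPA : pstar t * (θ * σ_d ^ 2) * Real.exp (r_d * (T - t)) = u_d - r_d := by
      simp only [pstar]
      rw [Real.exp_neg]
      field_simp
    have hE2 : Real.exp (2 * r_d * (T - t))
        = Real.exp (r_d * (T - t)) * Real.exp (r_d * (T - t)) := by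
      rw [← Real.exp_add]; congr 1; ring
    have hKpos : (0:ℝ) < Real.exp (-(θ * x * Real.exp (r_d * (T - t))) +
            ((θ * u / r_d) * (1 - Real.exp (r_d * (T - t)))
              - (θ ^ 2 * σ ^ 2 / (4 * r_d)) * (1 - Real.exp (2 * r_d * (T - t)))
              - ((u_d - r_d) ^ 2 / (2 * σ_d ^ 2)) * (T - t))) := Real.exp_pos _
    have hEpos : (0:ℝ) < Real.exp (r_d * (T - t)) := Real.exp_pos _
    have hγθ : (0:ℝ) < γ / θ := div_pos hγ hθ
    constructor
    · intro pp
      rw [hD1 x, hD2, ← hPA]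
      exact hjb_ineq (Real.exp_pos _) hEpos hγθ hθ hσd
    · rw [hDt, hD1 x, hD2, ← hPA, hE2]
      field_simp
      ring
end
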